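/- For every integer n ≥ 1 and every nonzero complex number z, the sum over all sequences s ∈ {H,T}^n of z^{A(s) − B(s)} (integer powers of z) equals the quadratic form (1,1) · M(z)^{n−1} · (1,1)^T, where M(z) is the 2×2 complex matrix with rows (1, z⁻¹) and (1, z). Equivalently, the probability generating function φ_n(z) = Σ_k P(Y_n = k) z^k of the score difference Y_n = A − B satisfies φ_n(z) = 2^{−n} · (1,1) · M(z)^{n−1} · (1,1)^T. -/

import Mathlib

/-- Bob's score: number of indices `i < n-1` with `s i = H` and `s (i+1) = T`
    (`true` = heads). -/
def bobScore {n : ℕ} (s : Fin n → Bool) : ℕ :=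
  (Finset.univ.filter (fun i : Fin (n - 1) =>
    s ⟨i.1, lt_of_lt_of_le i.2 (Nat.sub_le n 1)⟩ = true ∧
    s ⟨i.1 + 1, Nat.add_lt_of_lt_sub i.2⟩ = false)).card

/-- Alice's score: number of indices `i < n-1` with `s i = H` and `s (i+1) = H`. -/
def aliceScore {n : ℕ} (s : Fin n → Bool) : ℕ :=
  (Finset.univ.filter (fun i : Fin (n - 1) =>
    s ⟨i.1, lt_of_lt_of_le i.2 (Nat.sub_le n 1)⟩ = true ∧
    s ⟨i.1 + 1, Nat.add_lt_of_lt_sub i.2⟩ = true)).card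

/-- The transfer matrix `M(z)` with rows `(1, z⁻¹)` and `(1, z)`. -/
noncomputable def M (z : ℂ) : Matrix (Fin 2) (Fin 2) ℂ := !![1, z⁻¹; 1, z]

lemma zpow_sum' {α : Type*} (s : Finset α) (z : ℂ) (hz : z ≠ 0) (f : α → ℤ) :
    z ^ (∑ i ∈ s, f i) = ∏ i ∈ s, z ^ f i := by
  classical
  induction s using Finset.induction with
  | empty => simp
  | @insert a s h ih => rw [Finset.sum_insert h, Finset.prod_insert h, zpow_add₀ hz, ih]

lemma path_sum (N : Matrix (Fin 2) (Fin 2) ℂ) :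
    ∀ (k : ℕ) (w : Fin 2 → ℂ),
      ∑ t : Fin (k+1) → Fin 2, (∏ i : Fin k, N (t i.succ) (t i.castSucc)) * w (t 0) =
      ∑ b, ((N ^ k).mulVec w) b := by
  intro k
  induction k with
  | zero =>
      intro w
      simp only [pow_zero, Matrix.one_mulVec, Finset.univ_eq_empty, Finset.prod_empty, one_mul]
      exact Fintype.sum_equiv (Equiv.funUnique (Fin 1) (Fin 2)) _ _ (fun t => rfl)
  | succ k ih =>
      intro w
      rw [← Equiv.sum_comp (Fin.consEquiv (fun _ : Fin (k+2) => Fin 2)), Fintype.sum_prod_type]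
      have hprod : ∀ (x : Fin 2) (t : Fin (k+1) → Fin 2),
          (∏ i : Fin (k+1), N ((Fin.cons x t : Fin (k+2) → Fin 2) i.succ)
            ((Fin.cons x t : Fin (k+2) → Fin 2) i.castSucc)) =
          N (t 0) x * ∏ i : Fin k, N (t i.succ) (t i.castSucc) := by
        intro x t
        rw [Fin.prod_univ_succ]
        simp only [← Fin.succ_castSucc, Fin.cons_succ, Fin.castSucc_zero, Fin.cons_zero]
      calc ∑ x, ∑ t : Fin (k+1) → Fin 2,
              (∏ i : Fin (k+1), N ((Fin.consEquiv (fun _ : Fin (k+2) => Fin 2)) (x, t) i.succ)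
                ((Fin.consEquiv (fun _ : Fin (k+2) => Fin 2)) (x, t) i.castSucc)) *
                w ((Fin.consEquiv (fun _ : Fin (k+2) => Fin 2)) (x, t) 0)
          = ∑ t : Fin (k+1) → Fin 2, (∏ i : Fin k, N (t i.succ) (t i.castSucc)) * (N.mulVec w) (t 0) := by
            rw [Finset.sum_comm]
            refine Finset.sum_congr rfl fun t _ => ?_
            simp only [Fin.consEquiv_apply, hprod, Fin.cons_zero, Matrix.mulVec, dotProduct]
            rw [Finset.mul_sum]
            exact Finset.sum_congr rfl fun x _ => by ring
        _ = ∑ b, ((N ^ (k+1)).mulVec w) b := by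
            rw [ih (N.mulVec w), pow_succ, ← Matrix.mulVec_mulVec]

lemma key (z : ℂ) (hz : z ≠ 0) (k : ℕ) (s : Fin (k+1) → Bool) :
    z ^ ((aliceScore s : ℤ) - (bobScore s : ℤ)) =
      ∏ i : Fin k, M z (if s i.succ then 1 else 0) (if s i.castSucc then 1 else 0) := by
  have hA : (aliceScore s : ℤ) =
      ∑ i : Fin k, (if s i.castSucc = true ∧ s i.succ = true then (1:ℤ) else 0) := by
    rw [show aliceScore s =
      (Finset.univ.filter (fun i : Fin k => s i.castSucc = true ∧ s i.succ = true)).card from rfl,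
      Finset.card_filter]
    push_cast
    rfl
  have hB : (bobScore s : ℤ) =
      ∑ i : Fin k, (if s i.castSucc = true ∧ s i.succ = false then (1:ℤ) else 0) := by
    rw [show bobScore s =
      (Finset.univ.filter (fun i : Fin k => s i.castSucc = true ∧ s i.succ = false)).card from rfl,
      Finset.card_filter]
    push_cast
    rfl
  rw [hA, hB, ← Finset.sum_sub_distrib, zpow_sum' _ z hz]
  refine Finset.prod_congr rfl fun i _ => ?_
  rcases hc : s i.castSucc <;> rcases hd : s i.succ <;>
    simp [M, hc, hd]

/-- For `n ≥ 1` and `z ≠ 0`, the sum over all sequences of `z^(A(s) - B(s))`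
    equals `(1,1) ⬝ M(z)^(n-1) ⬝ (1,1)ᵀ`. -/
theorem sum_zpow_score_diff_eq_quadratic_form (n : ℕ) (hn : 1 ≤ n) (z : ℂ) (hz : z ≠ 0) :
    ∑ s : Fin n → Bool, z ^ ((aliceScore s : ℤ) - (bobScore s : ℤ)) =
      dotProduct ![1, 1] ((M z ^ (n - 1)).mulVec ![1, 1]) := by
  obtain ⟨k, rfl⟩ : ∃ k, n = k + 1 := ⟨n - 1, (Nat.succ_pred_eq_of_pos hn).symm⟩
  have hones : ∀ j : Fin 2, (![1,1] : Fin 2 → ℂ) j = (1:ℂ) := by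
    intro j; fin_cases j <;> simp
  have henc : ∀ (x : Fin 2), (if finTwoEquiv x = true then (1:Fin 2) else 0) = x := by decide
  calc ∑ s : Fin (k+1) → Bool, z ^ ((aliceScore s : ℤ) - (bobScore s : ℤ))
      = ∑ t : Fin (k+1) → Fin 2,
          (∏ i : Fin k, M z (t i.succ) (t i.castSucc)) * (![1,1] : Fin 2 → ℂ) (t 0) := by
        rw [← Equiv.sum_comp (Equiv.arrowCongr (Equiv.refl (Fin (k+1))) finTwoEquiv)]
        refine Finset.sum_congr rfl fun t _ => ?_
        rw [key z hz k ((Equiv.arrowCongr (Equiv.refl (Fin (k+1))) finTwoEquiv) t), hones, mul_one]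
        refine Finset.prod_congr rfl fun i _ => ?_
        show M z (if finTwoEquiv (t i.succ) = true then 1 else 0)
              (if finTwoEquiv (t i.castSucc) = true then 1 else 0) = _
        rw [henc, henc]
    _ = ∑ b, ((M z ^ k).mulVec ![1,1]) b := path_sum (M z) k ![1,1]
    _ = dotProduct ![1, 1] ((M z ^ (k + 1 - 1)).mulVec ![1, 1]) := by
        simp [dotProduct, Fin.sum_univ_two]
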